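/- Let E be a real inner product space, p_i, p_j ∈ E with p_i ≠ p_j, d = ‖p_j − p_i‖, and ε ≥ 1. Then every q ∈ E satisfying ⟪q − p_i, p_j − p_i⟫ < d²/ε satisfies ‖q − p_j‖ > d(1 − 1/ε). In particular, for ε = 2, every point of the cell is at distance strictly greater than d/2 from the neighbor p_j. -/

import Mathlib

/-- clearance bound for the CWVD half-space. With `d = ‖p_j − p_i‖`
and `ε ≥ 1`, every `q` with `⟪q − p_i, p_j − p_i⟫ < d²/ε` satisfies
`‖q − p_j‖ > d(1 − 1/ε)`; in particular for `ε = 2` every such point is at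
distance strictly greater than `d/2` from `p_j`. -/
theorem cwvd_halfspace_clearance
    {E : Type*} [NormedAddCommGroup E] [InnerProductSpace ℝ E]
    (pi pj : E) (hne : pi ≠ pj) (d : ℝ) (hd : d = ‖pj - pi‖)
    (ε : ℝ) (hε : 1 ≤ ε) :
    (∀ q : E, (inner ℝ (q - pi) (pj - pi) : ℝ) < d ^ 2 / ε → d * (1 - 1 / ε) < ‖q - pj‖) ∧
      (ε = 2 → ∀ q : E, (inner ℝ (q - pi) (pj - pi) : ℝ) < d ^ 2 / ε → d / 2 < ‖q - pj‖) := by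
  have hd0 : 0 < d := by
    rw [hd, norm_pos_iff, sub_ne_zero]; exact fun h => hne h.symm
  have hε0 : 0 < ε := lt_of_lt_of_le one_pos hε
  have main : ∀ q : E, (inner ℝ (q - pi) (pj - pi) : ℝ) < d ^ 2 / ε →
      d * (1 - 1 / ε) < ‖q - pj‖ := by
    intro q hq
    have hsplit : (inner ℝ (pj - q) (pj - pi) : ℝ)
        = ‖pj - pi‖ ^ 2 - inner ℝ (q - pi) (pj - pi) := by
      have : (pj - q : E) = (pj - pi) - (q - pi) := by abel
      rw [this, inner_sub_left, real_inner_self_eq_norm_sq]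
    have hlb : d ^ 2 * (1 - 1 / ε) < (inner ℝ (pj - q) (pj - pi) : ℝ) := by
      rw [hsplit, ← hd]
      have : d ^ 2 * (1 - 1 / ε) = d ^ 2 - d ^ 2 / ε := by ring
      rw [this]
      linarith
    have hcs : (inner ℝ (pj - q) (pj - pi) : ℝ) ≤ ‖pj - q‖ * ‖pj - pi‖ :=
      real_inner_le_norm _ _
    have hq' : ‖q - pj‖ = ‖pj - q‖ := norm_sub_rev _ _
    have hdn : ‖pj - pi‖ = d := hd.symm
    rw [hdn] at hcs
    rw [hq']
    nlinarith [norm_nonneg (pj - q)]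
  refine ⟨main, fun h2 q hq => ?_⟩
  have := main q hq
  rw [h2] at this
  linarith
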